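/- For any probability vector w on {1,...,K}, any loss vector ℓ ∈ [0,1]^K, and any η ∈ (0,1], the mixability gap δ = w·ℓ + (1/η)·ln(w·e^{-ηℓ}) satisfies δ ≤ (e−2)·η·(1 − w^*), where w^* = max_k w_k. -/

import Mathlib

set_option maxHeartbeats 1000000

lemma exp_tsum' (x : ℝ) : Real.exp x = ∑' n : ℕ, x ^ n / n.factorial := by
  rw [Real.exp_eq_exp_ℝ, NormedSpace.exp_eq_tsum_div]

lemma summable_exp_div (x : ℝ) : Summable (fun n : ℕ => x ^ n / n.factorial) :=
  NormedSpace.expSeries_div_summable x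

lemma tsum_shift2 (f : ℕ → ℝ) (hf : Summable f) :
    ∑' n, f n = f 0 + f 1 + ∑' n, f (n + 2) := by
  have h1 : Summable (fun n => f (n + 1)) := (summable_nat_add_iff 1).2 hf
  rw [Summable.tsum_eq_zero_add hf, Summable.tsum_eq_zero_add h1, ← add_assoc]

lemma exp_tail (x : ℝ) :
    Real.exp x = 1 + x + ∑' n : ℕ, x ^ (n + 2) / (n + 2).factorial := by
  rw [exp_tsum' x, tsum_shift2 _ (summable_exp_div x)]
  norm_num

lemma exp_quad_nonneg {x : ℝ} (h0 : 0 ≤ x) (h1 : x ≤ 1) :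
    Real.exp x ≤ 1 + x + (Real.exp 1 - 2) * x ^ 2 := by
  have hs2 : Summable (fun n : ℕ => x ^ (n + 2) / (n + 2).factorial) :=
    (summable_nat_add_iff 2).2 (summable_exp_div x)
  have hs1 : Summable (fun n : ℕ => (1:ℝ) ^ (n + 2) / (n + 2).factorial) :=
    (summable_nat_add_iff 2).2 (summable_exp_div 1)
  have hs1' : Summable (fun n : ℕ => x ^ 2 * ((1:ℝ) ^ (n + 2) / (n + 2).factorial)) :=
    hs1.mul_left _
  have hle : ∑' n : ℕ, x ^ (n + 2) / (n + 2).factorial ≤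
      ∑' n : ℕ, x ^ 2 * ((1:ℝ) ^ (n + 2) / (n + 2).factorial) := by
    refine Summable.tsum_le_tsum (fun n => ?_) hs2 hs1'
    have hfac : (0:ℝ) < (n + 2).factorial := by positivity
    have hp : x ^ (n + 2) ≤ x ^ 2 := pow_le_pow_of_le_one h0 h1 (by omega)
    simp only [one_pow, mul_one_div]
    exact (div_le_div_iff_of_pos_right hfac).2 hp
  have he1 : ∑' n : ℕ, (1:ℝ) ^ (n + 2) / (n + 2).factorial = Real.exp 1 - 2 := by
    have := exp_tail 1
    simp at this ⊢
    linarith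
  have := exp_tail x
  rw [this]
  calc 1 + x + ∑' n : ℕ, x ^ (n + 2) / (n + 2).factorial
      ≤ 1 + x + ∑' n : ℕ, x ^ 2 * ((1:ℝ) ^ (n + 2) / (n + 2).factorial) := by linarith
    _ = 1 + x + (Real.exp 1 - 2) * x ^ 2 := by rw [tsum_mul_left, he1]; ring

lemma exp_quad_nonpos {x : ℝ} (hx : x ≤ 0) :
    Real.exp x ≤ 1 + x + x ^ 2 / 2 := by
  set t : ℝ := -x with ht
  have ht0 : 0 ≤ t := by simp [ht]; linarith
  have h := Real.quadratic_le_exp_of_nonneg ht0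
  have h2 : Real.exp t * Real.exp x = 1 := by
    rw [← Real.exp_add]; simp [ht]
  have hexpos : (0:ℝ) < Real.exp t := Real.exp_pos t
  have hxpos : (0:ℝ) < Real.exp x := Real.exp_pos x
  have hrhs : 1 + x + x ^ 2 / 2 = 1 - t + t ^ 2 / 2 := by rw [ht]; ring
  rw [hrhs]
  have hq : (0:ℝ) < 1 - t + t ^ 2 / 2 := by nlinarith [sq_nonneg (t - 1)]
  have key : 1 ≤ (1 - t + t ^ 2 / 2) * Real.exp t := by
    have := mul_le_mul_of_nonneg_left h hq.le
    nlinarith [sq_nonneg (t ^ 2)]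
  nlinarith [mul_le_mul_of_nonneg_right key hxpos.le]

lemma exp_quad {x : ℝ} (h1 : -1 ≤ x) (h2 : x ≤ 1) :
    Real.exp x ≤ 1 + x + (Real.exp 1 - 2) * x ^ 2 := by
  have he2 : (1:ℝ)/2 ≤ Real.exp 1 - 2 := by nlinarith [Real.exp_one_gt_d9]
  rcases le_or_gt x 0 with h | h
  · have := exp_quad_nonpos h
    nlinarith [sq_nonneg x]
  · exact exp_quad_nonneg h.le h2

theorem mixability_gap_posterior_bound (K : ℕ) (hK : 0 < K)
    (w ℓ : Fin K → ℝ) (η : ℝ) (hη : η ∈ Set.Ioc (0:ℝ) 1)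
    (hw : ∀ k, 0 ≤ w k) (hw1 : ∑ k, w k = 1)
    (hℓ : ∀ k, ℓ k ∈ Set.Icc (0:ℝ) 1) :
    (∑ k, w k * ℓ k) + (1/η) * Real.log (∑ k, w k * Real.exp (-η * ℓ k)) ≤
      (Real.exp 1 - 2) * η *
        (1 - Finset.univ.sup' (Finset.univ_nonempty_iff.2 ⟨⟨0, hK⟩⟩) w) := by
  obtain ⟨hη0, hη1⟩ := hη
  obtain ⟨k₀, -, hk₀⟩ :=
    Finset.exists_mem_eq_sup' (Finset.univ_nonempty_iff.2 ⟨⟨0, hK⟩⟩ :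
      (Finset.univ : Finset (Fin K)).Nonempty) w
  rw [hk₀]
  set α := ∑ k, w k * ℓ k with hα
  set V := ∑ k, w k * (ℓ k - α) ^ 2 with hV
  set c := Real.exp 1 - 2 with hc
  have he2 : (0:ℝ) ≤ c := by rw [hc]; nlinarith [Real.exp_one_gt_d9]
  have hα0 : 0 ≤ α := Finset.sum_nonneg fun k _ => mul_nonneg (hw k) (hℓ k).1
  have hα1 : α ≤ 1 := by
    rw [hα, ← hw1]
    exact Finset.sum_le_sum fun k _ => mul_le_of_le_one_right (hw k) (hℓ k).2
  have hVnn : 0 ≤ V := Finset.sum_nonneg fun k _ => mul_nonneg (hw k) (sq_nonneg _)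
  -- pointwise exponential bound
  have hpt : ∀ k, Real.exp (-η * ℓ k) ≤
      Real.exp (-η * α) * (1 + η * (α - ℓ k) + c * (η * (α - ℓ k)) ^ 2) := by
    intro k
    have hx1 : -1 ≤ η * (α - ℓ k) := by nlinarith [(hℓ k).1, (hℓ k).2]
    have hx2 : η * (α - ℓ k) ≤ 1 := by nlinarith [(hℓ k).1, (hℓ k).2]
    have hq := exp_quad hx1 hx2
    rw [hc] at *
    calc Real.exp (-η * ℓ k)
        = Real.exp (-η * α) * Real.exp (η * (α - ℓ k)) := by
          rw [← Real.exp_add]; ring_nf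
      _ ≤ _ := mul_le_mul_of_nonneg_left hq (Real.exp_pos _).le
  -- sum bound
  have hsum : (∑ k, w k * Real.exp (-η * ℓ k)) ≤
      Real.exp (-η * α) * (1 + c * η ^ 2 * V) := by
    calc ∑ k, w k * Real.exp (-η * ℓ k)
        ≤ ∑ k, w k * (Real.exp (-η * α) *
            (1 + η * (α - ℓ k) + c * (η * (α - ℓ k)) ^ 2)) :=
          Finset.sum_le_sum fun k _ => mul_le_mul_of_nonneg_left (hpt k) (hw k)
      _ = ∑ k, ((Real.exp (-η * α) * (1 + η * α)) * w k
            - (Real.exp (-η * α) * η) * (w k * ℓ k)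
            + (Real.exp (-η * α) * c * η ^ 2) * (w k * (ℓ k - α) ^ 2)) := by
          exact Finset.sum_congr rfl fun k _ => by ring
      _ = Real.exp (-η * α) * (1 + c * η ^ 2 * V) := by
          rw [Finset.sum_add_distrib, Finset.sum_sub_distrib,
            ← Finset.mul_sum, ← Finset.mul_sum, ← Finset.mul_sum,
            hw1, ← hα, ← hV]
          ring
  -- positivity of the sum
  have hS : Real.exp (-η) ≤ ∑ k, w k * Real.exp (-η * ℓ k) := by
    calc Real.exp (-η) = ∑ k, w k * Real.exp (-η) := by
          rw [← Finset.sum_mul, hw1, one_mul]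
      _ ≤ _ := Finset.sum_le_sum fun k _ =>
          mul_le_mul_of_nonneg_left
            (Real.exp_le_exp.2 (by nlinarith [(hℓ k).2])) (hw k)
  have hSpos : 0 < ∑ k, w k * Real.exp (-η * ℓ k) :=
    lt_of_lt_of_le (Real.exp_pos _) hS
  have hqpos : (0:ℝ) < 1 + c * η ^ 2 * V := by positivity
  -- log bound
  have hlog : Real.log (∑ k, w k * Real.exp (-η * ℓ k)) ≤ -η * α + c * η ^ 2 * V := by
    have h1 := Real.log_le_log hSpos hsum
    rw [Real.log_mul (Real.exp_ne_zero _) (ne_of_gt hqpos), Real.log_exp] at h1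
    have h2 : Real.log (1 + c * η ^ 2 * V) ≤ c * η ^ 2 * V := by
      have := Real.log_le_sub_one_of_pos hqpos
      linarith
    linarith
  -- variance bound
  have hvar : V ≤ 1 - w k₀ := by
    have e1 : ∀ b : ℝ, ∑ k, w k * (ℓ k - b) ^ 2
        = (∑ k, w k * ℓ k ^ 2) - 2 * b * α + b ^ 2 := by
      intro b
      have : ∑ k, w k * (ℓ k - b) ^ 2
          = ∑ k, (w k * ℓ k ^ 2 - (2 * b) * (w k * ℓ k) + b ^ 2 * w k) :=
        Finset.sum_congr rfl fun k _ => by ring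
      rw [this, Finset.sum_add_distrib, Finset.sum_sub_distrib,
        ← Finset.mul_sum, ← Finset.mul_sum, ← hα, hw1]
      ring
    have h1 := e1 α
    have h2 := e1 (ℓ k₀)
    rw [← hV] at h1
    have hmp : V ≤ ∑ k, w k * (ℓ k - ℓ k₀) ^ 2 := by nlinarith [sq_nonneg (α - ℓ k₀)]
    have hsplit := Finset.add_sum_erase Finset.univ
      (fun k => w k * (ℓ k - ℓ k₀) ^ 2) (Finset.mem_univ k₀)
    have hsplitw := Finset.add_sum_erase Finset.univ w (Finset.mem_univ k₀)
    have hzero : w k₀ * (ℓ k₀ - ℓ k₀) ^ 2 = 0 := by ring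
    have hb : ∑ k ∈ Finset.univ.erase k₀, w k * (ℓ k - ℓ k₀) ^ 2
        ≤ ∑ k ∈ Finset.univ.erase k₀, w k := by
      refine Finset.sum_le_sum fun k _ => ?_
      have hd2 : (ℓ k - ℓ k₀) ^ 2 ≤ 1 := by
        nlinarith [(hℓ k).1, (hℓ k).2, (hℓ k₀).1, (hℓ k₀).2]
      calc w k * (ℓ k - ℓ k₀) ^ 2 ≤ w k * 1 := mul_le_mul_of_nonneg_left hd2 (hw k)
        _ = w k := mul_one _
    rw [hw1] at hsplitw
    calc V ≤ ∑ k, w k * (ℓ k - ℓ k₀) ^ 2 := hmp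
      _ = ∑ k ∈ Finset.univ.erase k₀, w k * (ℓ k - ℓ k₀) ^ 2 := by
          rw [← hsplit]
          simp
      _ ≤ ∑ k ∈ Finset.univ.erase k₀, w k := hb
      _ = 1 - w k₀ := by linarith
  -- conclude
  have hfinal : α + (1/η) * Real.log (∑ k, w k * Real.exp (-η * ℓ k)) ≤ c * η * V := by
    have h1 : (1/η) * Real.log (∑ k, w k * Real.exp (-η * ℓ k))
        ≤ (1/η) * (-η * α + c * η ^ 2 * V) :=
      mul_le_mul_of_nonneg_left hlog (by positivity)
    have h2 : (1/η) * (-η * α + c * η ^ 2 * V) = -α + c * η * V := by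
      field_simp
    linarith
  calc α + (1/η) * Real.log (∑ k, w k * Real.exp (-η * ℓ k)) ≤ c * η * V := hfinal
    _ ≤ c * η * (1 - w k₀) := by
        exact mul_le_mul_of_nonneg_left hvar (mul_nonneg he2 hη0.le)
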